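/- Let n be a positive integer and k : Fin n → ℝ a family of real numbers such that k i < 1 for every i, ∑ i, k i = 2, and such that for every finset I of Fin n the subset sum ∑_{i ∈ I} k i does not lie in the open interval (2/3, 4/3). Then every member of the family is an integer multiple of 2/3: for every i there exists an integer m with k i = (2/3) · m. -/

import Mathlib

open Finset

/-- Greedy lemma: a family of positive reals each at most 1 with total sum at
least 1 admits a subset with sum in `[1, 2)`. -/
lemma greedy_subset_sum {α : Type*} [DecidableEq α] :
    ∀ S : Finset α, ∀ x : α → ℝ, (∀ i ∈ S, 0 < x i ∧ x i ≤ 1) →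
    1 ≤ ∑ i ∈ S, x i → ∃ T ⊆ S, (1:ℝ) ≤ ∑ i ∈ T, x i ∧ ∑ i ∈ T, x i < 2 := by
  intro S
  induction S using Finset.strongInductionOn with
  | _ S ih =>
    intro x hx hsum
    by_cases h2 : ∑ i ∈ S, x i < 2
    · exact ⟨S, Finset.Subset.refl _, hsum, h2⟩
    · push_neg at h2
      have hne : S.Nonempty := by
        rcases S.eq_empty_or_nonempty with rfl | h
        · simp at hsum; linarith
        · exact h
      obtain ⟨i, hi⟩ := hne
      have hsub : S.erase i ⊂ S := Finset.erase_ssubset hi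
      have heq : x i + ∑ j ∈ S.erase i, x j = ∑ j ∈ S, x j :=
        Finset.add_sum_erase S x hi
      have hsum' : 1 ≤ ∑ j ∈ S.erase i, x j := by
        have := (hx i hi).2
        linarith
      obtain ⟨T, hT, h1, h2'⟩ := ih _ hsub x
        (fun j hj => hx j (Finset.mem_of_mem_erase hj)) hsum'
      exact ⟨T, hT.trans (Finset.erase_subset _ _), h1, h2'⟩

/-- Equality case of Lemma 2.2 (forward direction): if no subset sum of the
discrete curvatures lies in the open interval `(2/3, 4/3)`, then every
curvature is an integer multiple of `2/3`. -/
theorem curvature_int_multiple_two_thirds (n : ℕ) (hn : 0 < n) (k : Fin n → ℝ)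
    (hlt : ∀ i, k i < 1) (hsum : ∑ i, k i = 2)
    (hgap : ∀ I : Finset (Fin n), ∑ i ∈ I, k i ∉ Set.Ioo (2 / 3 : ℝ) (4 / 3)) :
    ∀ i, ∃ m : ℤ, k i = (2 / 3) * m := by
  -- rescale: x i = (3/2) k i
  set x : Fin n → ℝ := fun i => (3 / 2) * k i with hxdef
  have hgap' : ∀ I : Finset (Fin n),
      ¬ ((1:ℝ) < ∑ i ∈ I, x i ∧ ∑ i ∈ I, x i < 2) := by
    intro I ⟨h1, h2⟩
    have hI : ∑ i ∈ I, x i = (3/2) * ∑ i ∈ I, k i := by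
      simp [hxdef, Finset.mul_sum]
    apply hgap I
    constructor <;> [linarith [hI ▸ h1]; linarith [hI ▸ h2]]
  have hxsum : ∑ i, x i = 3 := by
    simp only [hxdef, ← Finset.mul_sum, hsum]; norm_num
  have hxlt : ∀ i, x i < 3/2 := fun i => by
    have := hlt i; simp only [hxdef]; linarith
  have hle1 : ∀ i, x i ≤ 1 := by
    intro i
    by_contra h
    push_neg at h
    have := hgap' {i}
    simp only [Finset.sum_singleton] at this
    exact this ⟨h, (hxlt i).trans (by norm_num)⟩
  -- every x j is ≤ 0 or equal to 1
  have hstep2 : ∀ j, x j ≤ 0 ∨ x j = 1 := by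
    intro j
    by_contra h
    push_neg at h
    obtain ⟨h0, h1⟩ := h
    have hx01 : 0 < x j ∧ x j < 1 := ⟨h0, lt_of_le_of_ne (hle1 j) h1⟩
    -- positives excluding j sum to at least 1
    set P : Finset (Fin n) := (Finset.univ.erase j).filter (fun i => 0 < x i) with hP
    have hsplit : ∑ i ∈ P, x i + ∑ i ∈ (Finset.univ.erase j).filter (fun i => ¬ 0 < x i), x i
        = ∑ i ∈ Finset.univ.erase j, x i := Finset.sum_filter_add_sum_filter_not _ _ _
    have hnonpos : ∑ i ∈ (Finset.univ.erase j).filter (fun i => ¬ 0 < x i), x i ≤ 0 :=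
      Finset.sum_nonpos (fun i hi => le_of_not_gt (Finset.mem_filter.mp hi).2)
    have herase : ∑ i ∈ Finset.univ.erase j, x i = 3 - x j := by
      have := Finset.add_sum_erase Finset.univ x (Finset.mem_univ j)
      linarith [hxsum ▸ this]
    have hPsum : 1 ≤ ∑ i ∈ P, x i := by
      have := hxlt j
      linarith
    obtain ⟨T, hTP, hT1, hT2⟩ := greedy_subset_sum P x
      (fun i hi => ⟨(Finset.mem_filter.mp hi).2, hle1 i⟩) hPsum
    have hTeq : ∑ i ∈ T, x i = 1 := by
      by_contra hne
      exact hgap' T ⟨lt_of_le_of_ne hT1 (Ne.symm hne), hT2⟩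
    have hjT : j ∉ T := fun hj =>
      (Finset.notMem_erase j Finset.univ) (Finset.mem_of_mem_filter j (hTP hj))
    apply hgap' (insert j T)
    rw [Finset.sum_insert hjT, hTeq]
    constructor <;> linarith [hx01.1, hx01.2]
  -- each x j is an integer
  have hint : ∀ j, ∃ m : ℤ, x j = m := by
    intro j
    rcases hstep2 j with hj0 | hj1
    swap
    · exact ⟨1, by rw [hj1]; norm_num⟩
    by_contra h
    push_neg at h
    set m : ℤ := ⌊x j⌋ with hm
    have hmlt : (m:ℝ) < x j := lt_of_le_of_ne (Int.floor_le _) (fun he => h m he.symm)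
    have hltm : x j < m + 1 := Int.lt_floor_add_one _
    have hmneg : m ≤ -1 := by
      by_contra hc
      push_neg at hc
      have : (0:ℝ) ≤ m := by exact_mod_cast hc
      linarith
    -- the set of ones
    set O : Finset (Fin n) := Finset.univ.filter (fun i => x i = 1) with hO
    have hOsum : ∑ i ∈ O, x i = (O.card : ℝ) := by
      rw [Finset.sum_congr rfl (fun i hi => (Finset.mem_filter.mp hi).2)]
      simp [hO]
    have hcompl : ∑ i ∈ Finset.univ.filter (fun i => ¬ x i = 1), x i ≤ x j := by
      have hjmem : j ∈ Finset.univ.filter (fun i => ¬ x i = 1) := by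
        simp only [Finset.mem_filter, Finset.mem_univ, true_and]
        intro he; rw [he] at hj0; linarith
      have := Finset.add_sum_erase (Finset.univ.filter (fun i => ¬ x i = 1)) x hjmem
      have hrest : ∑ i ∈ (Finset.univ.filter (fun i => ¬ x i = 1)).erase j, x i ≤ 0 := by
        apply Finset.sum_nonpos
        intro i hi
        rcases hstep2 i with h' | h'
        · exact h'
        · exact absurd h' (Finset.mem_filter.mp (Finset.mem_of_mem_erase hi)).2
      linarith
    have hsplit : ∑ i ∈ O, x i + ∑ i ∈ Finset.univ.filter (fun i => ¬ x i = 1), x i = 3 := by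
      rw [Finset.sum_filter_add_sum_filter_not]; exact hxsum
    have hcard : (1 - m : ℝ) < (O.card : ℝ) := by
      push_cast
      linarith
    have hcard' : (1 - m).toNat ≤ O.card := by
      have h1 : (1 - m : ℤ) < (O.card : ℤ) := by exact_mod_cast hcard
      omega
    obtain ⟨T, hTO, hTcard⟩ := Finset.exists_subset_card_eq hcard'
    have hTsum : ∑ i ∈ T, x i = (1 - m : ℝ) := by
      rw [Finset.sum_congr rfl (fun i hi => (Finset.mem_filter.mp (hTO hi)).2)]
      simp only [Finset.sum_const, nsmul_eq_mul, mul_one, hTcard]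
      have : ((1 - m).toNat : ℤ) = 1 - m := Int.toNat_of_nonneg (by omega)
      exact_mod_cast this
    have hjT : j ∉ T := by
      intro hj
      have := (Finset.mem_filter.mp (hTO hj)).2
      rw [this] at hj0; linarith
    apply hgap' (insert j T)
    rw [Finset.sum_insert hjT, hTsum]
    constructor <;> push_cast <;> linarith
  intro i
  obtain ⟨m, hm⟩ := hint i
  refine ⟨m, ?_⟩
  have : (3/2) * k i = (m:ℝ) := hm
  linarith
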